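/- Let n ≥ 3, let D_n = ⟨a,b | a^n = b^2 = 1, bab = a^{-1}⟩, and let T ⊆ ⟨a⟩ be a union of atoms of the Boolean algebra B(⟨a⟩). Then for every 1 ≤ h ≤ ⌊(n−1)/2⌋, χ_h(T) and χ_h(T²) are integers and 2χ_h(T²) is a perfect square (the square of an integer). -/

import Mathlib

open DihedralGroup Polynomial

/-- The degree-2 irreducible character `χ_h` of the dihedral group `D_n`:
`χ_h(a^k) = 2cos(2khπ/n)` and `χ_h(ba^k) = 0`. -/
noncomputable def chi (n h : ℕ) : DihedralGroup n → ℝ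
  | .r k => 2 * Real.cos (2 * k.val * h * Real.pi / n)
  | .sr _ => 0

/-- `χ(A) = Σ_{x ∈ A} χ(x)`. -/
noncomputable def chiSum (n h : ℕ) (A : Set (DihedralGroup n)) : ℝ :=
  ∑ᶠ x ∈ A, chi n h x

/-- `χ(A²) = Σ_{x,y ∈ A} χ(xy)`, over ordered pairs. -/
noncomputable def chiSum2 (n h : ℕ) (A : Set (DihedralGroup n)) : ℝ :=
  ∑ᶠ x ∈ A, ∑ᶠ y ∈ A, chi n h (x * y)

/-- The Cayley graph `X(G,S)`: vertices `G`, with `x,y` adjacent iff `x⁻¹y ∈ S`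
(for `S` inverse-closed and not containing `1`). -/
def cayleyGraph {G : Type*} [Group G] (S : Set G) : SimpleGraph G :=
  SimpleGraph.fromRel (fun x y => x⁻¹ * y ∈ S)

open scoped Classical in
/-- The adjacency matrix of a graph, over `ℂ`. -/
noncomputable def adjMat {V : Type*} [Fintype V] (G : SimpleGraph V) : Matrix V V ℂ :=
  Matrix.of fun x y => if G.Adj x y then 1 else 0

/-- A graph is integral if every eigenvalue of its adjacency matrix is an integer. -/
def IsIntegralGraph {V : Type*} [Fintype V] [DecidableEq V] (G : SimpleGraph V) : Prop :=
  ∀ μ ∈ spectrum ℂ (adjMat G), ∃ z : ℤ, μ = (z : ℂ)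

/-- The cyclic subgroup `⟨a⟩` of `D_n`, as a set. -/
def rSet (n : ℕ) : Set (DihedralGroup n) := {x | ∃ k, x = .r k}

/-- The coset `b⟨a⟩` of `D_n`, as a set. -/
def srSet (n : ℕ) : Set (DihedralGroup n) := {x | ∃ k, x = .sr k}

/-- `S` belongs to the Boolean algebra `B(⟨a⟩)`, i.e. `S ⊆ ⟨a⟩` is a union of atoms
`[a^l] = {a^k : gcd(k,n) = gcd(l,n)}`: membership in `S` is constant on each atom. -/
def InBooleanAlgebra (n : ℕ) (S : Set (DihedralGroup n)) : Prop :=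
  S ⊆ rSet n ∧ ∀ k l : ZMod n, Nat.gcd k.val n = Nat.gcd l.val n →
    (DihedralGroup.r k ∈ S ↔ DihedralGroup.r l ∈ S)

/-- The multiplicity of `x` in the multiset `S² = {s₁s₂ : (s₁,s₂) ∈ S × S}` (ordered pairs). -/
noncomputable def sqMult {n : ℕ} (S : Set (DihedralGroup n)) (x : DihedralGroup n) : ℕ :=
  Nat.card {p : DihedralGroup n × DihedralGroup n // p.1 ∈ S ∧ p.2 ∈ S ∧ p.1 * p.2 = x}

/-- The irreducible character `φ_h` of the cyclic group `⟨a⟩` of order `n`: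
`φ_h(a^k) = e^{2πihk/n}`. -/
noncomputable def phi (n h : ℕ) (k : ZMod n) : ℂ :=
  Complex.exp (2 * Real.pi * Complex.I * h * k.val / n)


namespace Stmt14Aux

open Finset

noncomputable def zet (n : ℕ) : ℂ := Complex.exp (2 * Real.pi * Complex.I / n)

lemma zet_pow_n (n : ℕ) [NeZero n] : zet n ^ n = 1 := by
  rw [zet, ← Complex.exp_nat_mul]
  have hn : (n : ℂ) ≠ 0 := Nat.cast_ne_zero.2 (NeZero.ne n)
  rw [show (n : ℂ) * (2 * Real.pi * Complex.I / n) = 2 * Real.pi * Complex.I by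
    field_simp]
  exact Complex.exp_two_pi_mul_I

lemma zet_pow_mod (n m : ℕ) [NeZero n] : zet n ^ m = zet n ^ (m % n) :=
  pow_eq_pow_mod m (zet_pow_n n)

lemma zet_pow_mul_mod (n h m : ℕ) [NeZero n] :
    zet n ^ (h * (m % n)) = zet n ^ (h * m) := by
  rw [mul_comm h, mul_comm h, pow_mul, pow_mul, ← zet_pow_mod]

lemma zet_pow_val_add (n h : ℕ) [NeZero n] (x y : ZMod n) :
    zet n ^ (h * (x + y).val) = zet n ^ (h * x.val) * zet n ^ (h * y.val) := by
  rw [← pow_add, ← Nat.mul_add, ZMod.val_add, zet_pow_mul_mod]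

lemma sum_exists_int {α : Type*} {s : Finset α} {F : α → ℂ}
    (h : ∀ a ∈ s, ∃ z : ℤ, F a = (z : ℂ)) : ∃ z : ℤ, ∑ a ∈ s, F a = (z : ℂ) := by
  classical
  induction s using Finset.induction_on with
  | empty => exact ⟨0, by simp⟩
  | insert _ _ hx ih =>
    obtain ⟨z1, hz1⟩ := h _ (Finset.mem_insert_self _ _)
    obtain ⟨z2, hz2⟩ := ih (fun a ha => h a (Finset.mem_insert_of_mem ha))
    exact ⟨z1 + z2, by rw [Finset.sum_insert hx, hz1, hz2]; push_cast; ring⟩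

noncomputable def atomSum (n h d : ℕ) [NeZero n] : ℂ :=
  ∑ k : ZMod n, if Nat.gcd k.val n = d then zet n ^ (h * k.val) else 0

lemma sum_multiples (n h d : ℕ) [NeZero n] (hd : d ∣ n) :
    ∃ z : ℤ, (∑ k : ZMod n, if d ∣ k.val then zet n ^ (h * k.val) else 0)
      = (z : ℂ) := by
  have hn0 : 0 < n := Nat.pos_of_ne_zero (NeZero.ne n)
  have hd0 : 0 < d := Nat.pos_of_dvd_of_pos hd hn0
  have hmul : d * (n / d) = n := Nat.mul_div_cancel' hd
  rw [← Finset.sum_filter]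
  have himg : univ.filter (fun k : ZMod n => d ∣ k.val)
      = (range (n / d)).image (fun j => ((d * j : ℕ) : ZMod n)) := by
    ext k
    simp only [mem_filter, mem_univ, true_and, mem_image, mem_range]
    constructor
    · rintro ⟨j, hj⟩
      have hk : k.val < n := ZMod.val_lt k
      refine ⟨j, ?_, ?_⟩
      · by_contra hcon
        push_neg at hcon
        have : d * (n / d) ≤ d * j := Nat.mul_le_mul_left d hcon
        omega
      · rw [← hj]
        exact ZMod.natCast_rightInverse k
    · rintro ⟨j, hjlt, rfl⟩
      have hlt : d * j < n := by
        have : d * j < d * (n / d) := (Nat.mul_lt_mul_left hd0).2 hjlt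
        omega
      rw [ZMod.val_cast_of_lt hlt]
      exact ⟨j, rfl⟩
  have hinj : ∀ x ∈ range (n / d), ∀ y ∈ range (n / d),
      ((d * x : ℕ) : ZMod n) = ((d * y : ℕ) : ZMod n) → x = y := by
    intro x hx y hy hxy
    simp only [mem_range] at hx hy
    have hxlt : d * x < n := by have := (Nat.mul_lt_mul_left hd0).2 hx; omega
    have hylt : d * y < n := by have := (Nat.mul_lt_mul_left hd0).2 hy; omega
    have := congrArg ZMod.val hxy
    rw [ZMod.val_cast_of_lt hxlt, ZMod.val_cast_of_lt hylt] at this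
    exact Nat.eq_of_mul_eq_mul_left hd0 this
  rw [himg, Finset.sum_image hinj]
  have hsum : ∑ j ∈ range (n / d), zet n ^ (h * ((d * j : ℕ) : ZMod n).val)
      = ∑ j ∈ range (n / d), (zet n ^ (h * d)) ^ j := by
    apply Finset.sum_congr rfl
    intro j hj
    simp only [mem_range] at hj
    have hlt : d * j < n := by have := (Nat.mul_lt_mul_left hd0).2 hj; omega
    rw [ZMod.val_cast_of_lt hlt, ← pow_mul, mul_assoc]
  rw [hsum]
  by_cases hw : zet n ^ (h * d) = 1
  · refine ⟨((n / d : ℕ) : ℤ), ?_⟩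
    simp only [hw, one_pow, Finset.sum_const, Finset.card_range, nsmul_eq_mul, mul_one]
    norm_cast
  · have hpow : (zet n ^ (h * d)) ^ (n / d) = 1 := by
      rw [← pow_mul, mul_assoc, hmul, mul_comm h n, pow_mul, zet_pow_n, one_pow]
    refine ⟨0, ?_⟩
    rw [geom_sum_eq hw, hpow]
    simp

lemma multiples_eq_atoms (n h d : ℕ) [NeZero n] (hd : d ∣ n) :
    (∑ k : ZMod n, if d ∣ k.val then zet n ^ (h * k.val) else 0)
      = ∑ e ∈ n.divisors.filter (fun e => d ∣ e), atomSum n h e := by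
  unfold atomSum
  rw [Finset.sum_comm]
  apply Finset.sum_congr rfl
  intro k _
  rw [Finset.sum_ite_eq (n.divisors.filter (fun e => d ∣ e)) (Nat.gcd k.val n)
    (fun _ => zet n ^ (h * k.val))]
  have : (Nat.gcd k.val n ∈ n.divisors.filter (fun e => d ∣ e)) ↔ d ∣ k.val := by
    simp only [mem_filter, Nat.mem_divisors]
    constructor
    · rintro ⟨-, hdg⟩
      exact dvd_trans hdg (Nat.gcd_dvd_left _ _)
    · intro hk
      exact ⟨⟨Nat.gcd_dvd_right _ _, NeZero.ne n⟩, Nat.dvd_gcd hk hd⟩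
  by_cases hk : d ∣ k.val
  · rw [if_pos hk, if_pos (this.2 hk)]
  · rw [if_neg hk, if_neg (fun hmem => hk (this.1 hmem))]

lemma atom_int (n h : ℕ) [NeZero n] :
    ∀ m : ℕ, ∀ d : ℕ, d ∣ n → n / d ≤ m → ∃ z : ℤ, atomSum n h d = (z : ℂ) := by
  have hn0 : 0 < n := Nat.pos_of_ne_zero (NeZero.ne n)
  intro m
  induction m with
  | zero =>
    intro d hd hle
    have hd0 : 0 < d := Nat.pos_of_dvd_of_pos hd hn0
    have : 0 < n / d := Nat.div_pos (Nat.le_of_dvd hn0 hd) hd0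
    omega
  | succ m ih =>
    intro d hd hle
    have hd0 : 0 < d := Nat.pos_of_dvd_of_pos hd hn0
    classical
    have hmem : d ∈ (n.divisors.filter (fun e => d ∣ e)) := by
      simp [Nat.mem_divisors, hd, NeZero.ne n]
    have hsplit := multiples_eq_atoms n h d hd
    rw [← Finset.add_sum_erase _ _ hmem] at hsplit
    obtain ⟨z1, hz1⟩ := sum_multiples n h d hd
    obtain ⟨z2, hz2⟩ := sum_exists_int
      (s := (n.divisors.filter (fun e => d ∣ e)).erase d) (F := fun e => atomSum n h e)
      (fun e he => by
        simp only [Finset.mem_erase, Finset.mem_filter, Nat.mem_divisors] at he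
        obtain ⟨hne, ⟨hedvd, -⟩, hde⟩ := he
        have he0 : 0 < e := Nat.pos_of_dvd_of_pos hedvd hn0
        have hdlt : d < e := lt_of_le_of_ne (Nat.le_of_dvd he0 hde) hne.symm
        have hlt : n / e < n / d := by
          by_contra hcon
          push_neg at hcon
          have h1 : n / e * e = n := Nat.div_mul_cancel hedvd
          have h2 : n / d * d = n := Nat.div_mul_cancel hd
          have he1 : 0 < n / e := Nat.div_pos (Nat.le_of_dvd hn0 hedvd) he0
          nlinarith
        exact ih e hedvd (by omega))
    rw [hz1, hz2] at hsplit
    refine ⟨z1 - z2, ?_⟩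
    push_cast
    linear_combination -hsplit

lemma rep_gcd (n e : ℕ) [NeZero n] (he : e ∣ n) : Nat.gcd ((e : ZMod n)).val n = e := by
  have hn0 : 0 < n := Nat.pos_of_ne_zero (NeZero.ne n)
  rcases eq_or_lt_of_le (Nat.le_of_dvd hn0 he) with heq | hlt
  · subst heq
    simp [ZMod.natCast_self]
  · rw [ZMod.val_cast_of_lt hlt, Nat.gcd_eq_left he]

lemma f_int (n h : ℕ) [NeZero n] (S : Finset (ZMod n))
    (hatom : ∀ k l : ZMod n, Nat.gcd k.val n = Nat.gcd l.val n → (k ∈ S ↔ l ∈ S)) :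
    ∃ z : ℤ, ∑ k ∈ S, zet n ^ (h * k.val) = (z : ℂ) := by
  classical
  have hexp : ∀ k : ZMod n, zet n ^ (h * k.val)
      = ∑ e ∈ n.divisors, if Nat.gcd k.val n = e then zet n ^ (h * k.val) else 0 := by
    intro k
    rw [Finset.sum_ite_eq n.divisors (Nat.gcd k.val n) (fun _ => zet n ^ (h * k.val)),
      if_pos (by simp only [Nat.mem_divisors]; exact ⟨Nat.gcd_dvd_right _ _, NeZero.ne n⟩)]
  rw [Finset.sum_congr rfl (fun k _ => hexp k), Finset.sum_comm]
  apply sum_exists_int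
  intro e he
  simp only [Nat.mem_divisors] at he
  have hrep : Nat.gcd ((e : ZMod n)).val n = e := rep_gcd n e he.1
  by_cases hT : ((e : ZMod n)) ∈ S
  · have hext : ∑ k ∈ S, (if Nat.gcd k.val n = e then zet n ^ (h * k.val) else 0)
        = atomSum n h e := by
      unfold atomSum
      apply Finset.sum_subset (Finset.subset_univ S)
      intro k _ hk
      rw [if_neg]
      intro hg
      exact hk ((hatom k (e : ZMod n) (by rw [hg, hrep])).2 hT)
    rw [hext]
    exact atom_int n h (n / e) e he.1 le_rfl
  · refine ⟨0, ?_⟩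
    rw [Finset.sum_eq_zero, Int.cast_zero]
    intro k hk
    rw [if_neg]
    intro hg
    exact hT ((hatom k (e : ZMod n) (by rw [hg, hrep])).1 hk)

lemma zet_pow_add_conj (n : ℕ) [NeZero n] (m : ℕ) :
    zet n ^ m + (starRingEnd ℂ) (zet n ^ m)
      = 2 * Complex.cos ((2 * Real.pi * m / n : ℝ) : ℂ) := by
  have hz : zet n ^ m = Complex.exp (((2 * Real.pi * m / n : ℝ) : ℂ) * Complex.I) := by
    rw [zet, ← Complex.exp_nat_mul]
    congr 1
    push_cast
    ring
  rw [hz, ← Complex.exp_conj, map_mul, Complex.conj_ofReal, Complex.conj_I,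
    show ((2 * Real.pi * m / n : ℝ) : ℂ) * -Complex.I
      = (-((2 * Real.pi * m / n : ℝ) : ℂ)) * Complex.I by ring,
    Complex.exp_mul_I, Complex.exp_mul_I, Complex.cos_neg, Complex.sin_neg]
  ring

end Stmt14Aux

/-- Corollary 3.7. If `T ⊆ ⟨a⟩` is a union of atoms of `B(⟨a⟩)`, then for
every `1 ≤ h ≤ ⌊(n−1)/2⌋`, `χ_h(T)` and `χ_h(T²)` are integers and `2χ_h(T²)` is the
square of an integer. -/
theorem stmt14 (n : ℕ) (hn : 3 ≤ n) [NeZero n]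
    (T : Set (DihedralGroup n)) (hB : InBooleanAlgebra n T) :
    ∀ h : ℕ, 1 ≤ h → h ≤ (n - 1) / 2 →
      (∃ z : ℤ, chiSum n h T = (z : ℝ)) ∧
      (∃ z : ℤ, chiSum2 n h T = (z : ℝ)) ∧
      (∃ z : ℤ, 2 * chiSum2 n h T = (z : ℝ) ^ 2) := by
  
  intro h _ _
  classical
  obtain ⟨hsub, hatom⟩ := hB
  set S : Finset (ZMod n) := Finset.univ.filter (fun k => DihedralGroup.r k ∈ T) with hS
  have hmemS : ∀ k : ZMod n, k ∈ S ↔ DihedralGroup.r k ∈ T := by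
    intro k; simp [hS]
  have hTc : T = (↑(S.image DihedralGroup.r) : Set (DihedralGroup n)) := by
    ext x
    simp only [Finset.coe_image, Set.mem_image, Finset.mem_coe]
    constructor
    · intro hx
      obtain ⟨k, rfl⟩ := hsub hx
      exact ⟨k, (hmemS k).2 hx, rfl⟩
    · rintro ⟨k, hk, rfl⟩
      exact (hmemS k).1 hk
  have hinj : ∀ x ∈ S, ∀ y ∈ S, DihedralGroup.r x = DihedralGroup.r y → x = y := by
    intro x _ y _ hxy
    simpa using hxy
  obtain ⟨z, hz⟩ := Stmt14Aux.f_int n h S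
    (fun k l hg => by rw [hmemS, hmemS]; exact hatom k l hg)
  set f : ℂ := ∑ k ∈ S, Stmt14Aux.zet n ^ (h * k.val) with hf
  have hchi : ∀ k : ZMod n, ((chi n h (DihedralGroup.r k) : ℝ) : ℂ)
      = Stmt14Aux.zet n ^ (h * k.val) + (starRingEnd ℂ) (Stmt14Aux.zet n ^ (h * k.val)) := by
    intro k
    rw [Stmt14Aux.zet_pow_add_conj]
    show ((2 * Real.cos (2 * (k.val : ℝ) * h * Real.pi / n) : ℝ) : ℂ) = _
    rw [show (2 * (k.val : ℝ) * h * Real.pi / n)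
      = (2 * Real.pi * ((h * k.val : ℕ) : ℝ) / n) by push_cast; ring]
    push_cast [Complex.ofReal_cos]
    ring
  have hchimul : ∀ k l : ZMod n,
      ((chi n h (DihedralGroup.r k * DihedralGroup.r l) : ℝ) : ℂ)
      = (Stmt14Aux.zet n ^ (h * k.val) * Stmt14Aux.zet n ^ (h * l.val))
        + (starRingEnd ℂ) (Stmt14Aux.zet n ^ (h * k.val) * Stmt14Aux.zet n ^ (h * l.val)) := by
    intro k l
    rw [DihedralGroup.r_mul_r, ← Stmt14Aux.zet_pow_val_add, hchi]
  have hcs : chiSum n h T = ∑ k ∈ S, chi n h (DihedralGroup.r k) := by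
    rw [chiSum, hTc, finsum_mem_coe_finset, Finset.sum_image hinj]
  have hcsC : ((chiSum n h T : ℝ) : ℂ) = f + (starRingEnd ℂ) f := by
    rw [hcs, Complex.ofReal_sum,
      Finset.sum_congr rfl (fun k _ => hchi k), Finset.sum_add_distrib, hf, map_sum]
  have hcs2 : chiSum2 n h T
      = ∑ k ∈ S, ∑ l ∈ S, chi n h (DihedralGroup.r k * DihedralGroup.r l) := by
    rw [chiSum2, hTc, finsum_mem_coe_finset,
      Finset.sum_congr rfl (fun x _ => finsum_mem_coe_finset _ _),
      Finset.sum_image hinj]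
    exact Finset.sum_congr rfl (fun k _ => Finset.sum_image hinj)
  have h1 : ∑ k ∈ S, ∑ l ∈ S,
      Stmt14Aux.zet n ^ (h * k.val) * Stmt14Aux.zet n ^ (h * l.val) = f * f := by
    rw [hf, ← Finset.sum_mul_sum]
  have h2 : ∑ k ∈ S, ∑ l ∈ S, (starRingEnd ℂ)
      (Stmt14Aux.zet n ^ (h * k.val) * Stmt14Aux.zet n ^ (h * l.val))
      = (starRingEnd ℂ) (f * f) := by
    rw [← h1, map_sum]
    exact Finset.sum_congr rfl fun k _ => (map_sum (starRingEnd ℂ) _ S).symm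
  have hcs2C : ((chiSum2 n h T : ℝ) : ℂ) = f * f + (starRingEnd ℂ) (f * f) := by
    rw [hcs2, Complex.ofReal_sum,
      Finset.sum_congr rfl (fun k _ => by
        rw [Complex.ofReal_sum,
          Finset.sum_congr rfl (fun l _ => hchimul k l), Finset.sum_add_distrib]),
      Finset.sum_add_distrib, h1, h2]
  have e1 : ((chiSum n h T : ℝ) : ℂ) = ((2 * z : ℤ) : ℂ) := by
    rw [hcsC, hz, map_intCast]; push_cast; ring
  have e2 : ((chiSum2 n h T : ℝ) : ℂ) = ((2 * z ^ 2 : ℤ) : ℂ) := by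
    rw [hcs2C, hz, ← Int.cast_mul, map_intCast]; push_cast; ring
  have e1' : chiSum n h T = ((2 * z : ℤ) : ℝ) := by exact_mod_cast e1
  have e2' : chiSum2 n h T = ((2 * z ^ 2 : ℤ) : ℝ) := by exact_mod_cast e2
  refine ⟨⟨2 * z, e1'⟩, ⟨2 * z ^ 2, e2'⟩, ⟨2 * z, ?_⟩⟩
  rw [e2']
  push_cast
  ring
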